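/- Let W = (H, Z) be an ew-system and let S ⊆ Z be a set of ew-conditions all sharing the same level l. Suppose that for any two extended models (I,ν) and (I',ν') of W that are succ(l)-optimal (resp. succ(l)-min-optimal) — or for any two extended models of W, in case succ(l) is undefined, i.e., l is the greatest level of W — the equality Σ_{B ∈ S} (⟦I⊨B⟧ + ⟦(I,ν)⊨B⟧) = Σ_{B ∈ S} (⟦I'⊨B⟧ + ⟦(I',ν')⊨B⟧) holds. Then W and the ew-system (H, Z \ S) have the same optimal (resp. min-optimal) extended models. -/

import Mathlib

open scoped Classical

/-- An ew-condition: a set of extended models, an integer weight,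
a cost (coefficients) function on evaluations, and a positive integer level. -/
structure EWCond (ι ε : Type*) where
  Mod : Set (ι × ε)
  w : ℤ
  c : ε → ℝ
  lvl : ℕ+

namespace EWCond

variable {ι ε : Type*}

/-- `I` is a model of the ew-condition `B`. -/
def IsModel (B : EWCond ι ε) (I : ι) : Prop := ∃ ν, (I, ν) ∈ B.Mod

/-- `⟦I ⊨ B⟧`: the weight of `B` if `I` is a model of `B`, and `0` otherwise. -/
noncomputable def costI (B : EWCond ι ε) (I : ι) : ℝ :=
  if B.IsModel I then (B.w : ℝ) else 0

/-- `⟦(I,ν) ⊨ B⟧`: `c(B)(ν)` if `(I,ν)` is an extended model of `B`, and `0` otherwise. -/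
noncomputable def costE (B : EWCond ι ε) (p : ι × ε) : ℝ :=
  if p ∈ B.Mod then B.c p.2 else 0

end EWCond

/-- An ew-system: the extended-model set of its hard theory
together with a finite (multi)set of ew-conditions. -/
structure EWSystem (ι ε : Type*) where
  H : Set (ι × ε)
  Z : Multiset (EWCond ι ε)

namespace EWSystem

variable {ι ε : Type*}

/-- `I` is a model of the ew-system `W`. -/
def IsModel (W : EWSystem ι ε) (I : ι) : Prop := ∃ ν, (I, ν) ∈ W.H

/-- `levels(W)`. -/
noncomputable def levels (W : EWSystem ι ε) : Finset ℕ+ :=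
  (W.Z.map EWCond.lvl).toFinset

/-- `Σ_{B ∈ W_l} ⟦I ⊨ B⟧`. -/
noncomputable def levelCostI (W : EWSystem ι ε) (l : ℕ+) (I : ι) : ℝ :=
  (W.Z.map (fun B => if B.lvl = l then B.costI I else 0)).sum

/-- `Σ_{B ∈ W_l} (⟦I ⊨ B⟧ + ⟦(I,ν) ⊨ B⟧)`. -/
noncomputable def levelCostE (W : EWSystem ι ε) (l : ℕ+) (p : ι × ε) : ℝ :=
  (W.Z.map (fun B => if B.lvl = l then B.costI p.1 + B.costE p else 0)).sum

/-- Elements of `S` at which `f` is `r`-extremal: for `r = (· ≤ ·)` these are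
the maximizers of `f` on `S`; for `r = (fun a b => b ≤ a)`, the minimizers. -/
def argOn {α : Type*} (r : ℝ → ℝ → Prop) (f : α → ℝ) (S : Set α) : Set α :=
  {x ∈ S | ∀ y ∈ S, r (f y) (f x)}

/-- Instantiating `r := maxR` yields the argmax-based (optimal) notions. -/
def maxR : ℝ → ℝ → Prop := fun a b => a ≤ b

/-- Instantiating `r := minR` yields the argmin-based (min-optimal) notions. -/
def minR : ℝ → ℝ → Prop := fun a b => b ≤ a

/-- The levels of `W` strictly greater than `l`, in ascending order. -/
noncomputable def levelsAbove (W : EWSystem ι ε) (l : ℕ+) : List ℕ+ :=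
  (W.levels.filter (fun l' => l < l')).sort (· ≤ ·)

/-- Processing an ascending list `a₁ < a₂ < ⋯ < aₖ` of levels:
`argOn r f_{a₁} (argOn r f_{a₂} (⋯ (argOn r f_{aₖ} (models of W))))`.
Hence `W.chainI r (W.levelsAbove l)` is the set over which the `l`-optimization
ranges: all models of `W` when `l` is the greatest level, and the
`succ(l)`-optimal models otherwise. -/
noncomputable def chainI (W : EWSystem ι ε) (r : ℝ → ℝ → Prop) : List ℕ+ → Set ι
  | [] => {I | W.IsModel I}
  | a :: rest => argOn r (W.levelCostI a) (W.chainI r rest)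

/-- `I` is an `l`-optimal (for `r = maxR`; `l`-min-optimal for `r = minR`) model of `W`. -/
def LOptI (W : EWSystem ι ε) (r : ℝ → ℝ → Prop) (l : ℕ+) (I : ι) : Prop :=
  I ∈ argOn r (W.levelCostI l) (W.chainI r (W.levelsAbove l))

/-- `I` is an optimal (for `r = maxR`; min-optimal for `r = minR`) model of `W`:
a model of `W` that is `l`-optimal for every level `l ∈ levels(W)`. -/
def OptimalI (W : EWSystem ι ε) (r : ℝ → ℝ → Prop) (I : ι) : Prop :=
  W.IsModel I ∧ ∀ l ∈ W.levels, W.LOptI r l I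

/-- The extended-model analogue of `chainI`. -/
noncomputable def chainE (W : EWSystem ι ε) (r : ℝ → ℝ → Prop) : List ℕ+ → Set (ι × ε)
  | [] => W.H
  | a :: rest => argOn r (W.levelCostE a) (W.chainE r rest)

/-- `(I,ν)` is an `l`-optimal (resp. `l`-min-optimal) extended model of `W`. -/
def LOptE (W : EWSystem ι ε) (r : ℝ → ℝ → Prop) (l : ℕ+) (p : ι × ε) : Prop :=
  p ∈ argOn r (W.levelCostE l) (W.chainE r (W.levelsAbove l))

/-- `(I,ν)` is an optimal (resp. min-optimal) extended model of `W`. -/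
def OptimalE (W : EWSystem ι ε) (r : ℝ → ℝ → Prop) (p : ι × ε) : Prop :=
  p ∈ W.H ∧ ∀ l ∈ W.levels, W.LOptE r l p

end EWSystem

namespace EWSystem

variable {ι ε : Type*}

lemma mem_argOn' {α : Type*} {r : ℝ → ℝ → Prop} {f : α → ℝ} {D : Set α} {x : α} :
    x ∈ argOn r f D ↔ x ∈ D ∧ ∀ y ∈ D, r (f y) (f x) := Iff.rfl

lemma argOn_congr' {α : Type*} {r : ℝ → ℝ → Prop} (hr : r = maxR ∨ r = minR)
    {f g : α → ℝ} {D : Set α} (h : ∀ x ∈ D, ∀ y ∈ D, f x - f y = g x - g y) :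
    argOn r f D = argOn r g D := by
  have key : ∀ x ∈ D, ∀ y ∈ D, (r (f y) (f x) ↔ r (g y) (g x)) := by
    intro x hx y hy
    have h1 := h x hx y hy
    rcases hr with rfl | rfl <;> simp only [maxR, minR] <;>
      exact ⟨fun hh => by linarith, fun hh => by linarith⟩
  ext x
  simp only [mem_argOn']
  exact ⟨fun ⟨hx, hall⟩ => ⟨hx, fun y hy => (key x hx y hy).mp (hall y hy)⟩,
    fun ⟨hx, hall⟩ => ⟨hx, fun y hy => (key x hx y hy).mpr (hall y hy)⟩⟩

lemma argOn_of_const' {α : Type*} {r : ℝ → ℝ → Prop} (hr : r = maxR ∨ r = minR)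
    {f : α → ℝ} {D : Set α} (h : ∀ x ∈ D, ∀ y ∈ D, f x = f y) :
    argOn r f D = D := by
  ext x
  simp only [mem_argOn']
  refine ⟨fun hx => hx.1, fun hx => ⟨hx, fun y hy => ?_⟩⟩
  rw [h y hy x hx]
  rcases hr with rfl | rfl <;> exact le_refl _

lemma chainE_nil' (V : EWSystem ι ε) (r : ℝ → ℝ → Prop) : V.chainE r [] = V.H := rfl

lemma chainE_cons' (V : EWSystem ι ε) (r : ℝ → ℝ → Prop) (a : ℕ+) (rest : List ℕ+) :
    V.chainE r (a :: rest) = argOn r (V.levelCostE a) (V.chainE r rest) := rfl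

lemma levelsAbove_of_empty' (V : EWSystem ι ε) (l' : ℕ+)
    (h : V.levels.filter (fun x => l' < x) = ∅) : V.levelsAbove l' = [] := by
  rw [levelsAbove, h, Finset.sort_empty]

lemma filter_min'_erase (V : EWSystem ι ε) (l' : ℕ+)
    (h : (V.levels.filter (fun x => l' < x)).Nonempty) :
    V.levels.filter (fun x => ((V.levels.filter (fun x => l' < x)).min' h) < x)
      = (V.levels.filter (fun x => l' < x)).erase
          ((V.levels.filter (fun x => l' < x)).min' h) := by
  set T := V.levels.filter (fun x => l' < x) with hT
  set m := T.min' h with hm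
  have hmT : m ∈ T := Finset.min'_mem _ _
  have hml' : l' < m := (Finset.mem_filter.mp hmT).2
  ext x
  simp only [Finset.mem_filter, Finset.mem_erase, hT]
  constructor
  · rintro ⟨hx, hmx⟩
    exact ⟨ne_of_gt hmx, hx, lt_trans hml' hmx⟩
  · rintro ⟨hne, hx, hlx⟩
    refine ⟨hx, lt_of_le_of_ne ?_ (Ne.symm hne)⟩
    exact Finset.min'_le _ _ (by simp [hT, Finset.mem_filter, hx, hlx])

lemma levelsAbove_cons' (V : EWSystem ι ε) (l' : ℕ+)
    (h : (V.levels.filter (fun x => l' < x)).Nonempty) :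
    V.levelsAbove l' = (V.levels.filter (fun x => l' < x)).min' h ::
      V.levelsAbove ((V.levels.filter (fun x => l' < x)).min' h) := by
  set T := V.levels.filter (fun x => l' < x) with hT
  set m := T.min' h with hm
  have key : V.levels.filter (fun x => m < x) = T.erase m := filter_min'_erase V l' h
  rw [levelsAbove, levelsAbove, key]
  have h2 : T = insert m (T.erase m) := (Finset.insert_erase (Finset.min'_mem _ _)).symm
  have h3 : Finset.sort (insert m (T.erase m)) (· ≤ ·) = m :: Finset.sort (T.erase m) (· ≤ ·) :=
    Finset.sort_insert (r := (· ≤ ·)) (fun b hb => Finset.min'_le _ _ (Finset.mem_of_mem_erase hb))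
      (Finset.notMem_erase _ _)
  rw [← h2] at h3
  exact h3

lemma chainE_congr' (V V' : EWSystem ι ε) (hH : V'.H = V.H) (r : ℝ → ℝ → Prop) :
    ∀ xs : List ℕ+, (∀ x ∈ xs, V'.levelCostE x = V.levelCostE x) →
      V.chainE r xs = V'.chainE r xs := by
  intro xs
  induction xs with
  | nil => intro _; rw [chainE_nil', chainE_nil', hH]
  | cons a rest ih =>
    intro hx
    rw [chainE_cons', chainE_cons', ih (fun x hxr => hx x (List.mem_cons_of_mem _ hxr)),
      hx a List.mem_cons_self]

lemma mem_chainE_of_opt (V : EWSystem ι ε) (r : ℝ → ℝ → Prop) (p : ι × ε)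
    (hp : p ∈ V.H) (hopt : ∀ m ∈ V.levels, V.LOptE r m p) :
    ∀ l', p ∈ V.chainE r (V.levelsAbove l') := by
  intro l'
  by_cases hne : (V.levels.filter (fun x => l' < x)).Nonempty
  · rw [levelsAbove_cons' V l' hne, chainE_cons']
    set m := (V.levels.filter (fun x => l' < x)).min' hne
    have hm : m ∈ V.levels := (Finset.mem_filter.mp (Finset.min'_mem _ hne)).1
    exact hopt m hm
  · rw [Finset.not_nonempty_iff_eq_empty] at hne
    rw [levelsAbove_of_empty' V l' hne, chainE_nil']
    exact hp

lemma chain_eq_aux (V V' : EWSystem ι ε) (r : ℝ → ℝ → Prop)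
    (hr : r = maxR ∨ r = minR) (l : ℕ+)
    (hH : V'.H = V.H)
    (hlev : ∀ x, x ≠ l → (x ∈ V.levels ↔ x ∈ V'.levels))
    (hlev' : V'.levels ⊆ V.levels)
    (hcost : ∀ x, x ≠ l → V'.levelCostE x = V.levelCostE x)
    (hcostl : ∀ q q', q ∈ V.chainE r (V.levelsAbove l) → q' ∈ V.chainE r (V.levelsAbove l) →
      V.levelCostE l q - V.levelCostE l q' = V'.levelCostE l q - V'.levelCostE l q')
    (hl0 : l ∉ V'.levels → ∀ q, V'.levelCostE l q = 0) :
    ∀ l', V.chainE r (V.levelsAbove l') = V'.chainE r (V'.levelsAbove l') := by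
  have hAl : V'.levelsAbove l = V.levelsAbove l := by
    rw [levelsAbove, levelsAbove]
    congr 1
    ext x
    simp only [Finset.mem_filter]
    constructor
    · rintro ⟨hx, hlx⟩; exact ⟨(hlev x (ne_of_gt hlx)).mpr hx, hlx⟩
    · rintro ⟨hx, hlx⟩; exact ⟨(hlev x (ne_of_gt hlx)).mp hx, hlx⟩
  have hDl : V.chainE r (V.levelsAbove l) = V'.chainE r (V.levelsAbove l) := by
    refine chainE_congr' V V' hH r _ (fun x hx => ?_)
    have : l < x := (Finset.mem_filter.mp ((Finset.mem_sort _).mp hx)).2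
    exact hcost x (ne_of_gt this)
  suffices h : ∀ n l', (V.levels.filter (fun x => l' < x)).card ≤ n →
      V.chainE r (V.levelsAbove l') = V'.chainE r (V'.levelsAbove l') by
    intro l'; exact h _ l' le_rfl
  intro n
  induction n with
  | zero =>
    intro l' hc
    have he : V.levels.filter (fun x => l' < x) = ∅ := Finset.card_eq_zero.mp (Nat.le_zero.mp hc)
    have he' : V'.levels.filter (fun x => l' < x) = ∅ := by
      rw [← Finset.subset_empty, ← he]
      exact Finset.filter_subset_filter _ hlev'
    rw [levelsAbove_of_empty' V l' he, levelsAbove_of_empty' V' l' he', chainE_nil', chainE_nil', hH]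
  | succ n ih =>
    intro l' hc
    by_cases hne : (V.levels.filter (fun x => l' < x)).Nonempty
    · set m := (V.levels.filter (fun x => l' < x)).min' hne with hmdef
      have hmT : m ∈ V.levels.filter (fun x => l' < x) := Finset.min'_mem _ _
      have hmlev : m ∈ V.levels := (Finset.mem_filter.mp hmT).1
      have hl'm : l' < m := (Finset.mem_filter.mp hmT).2
      have hcons := levelsAbove_cons' V l' hne
      have hcard : (V.levels.filter (fun x => m < x)).card ≤ n := by
        rw [filter_min'_erase V l' hne, Finset.card_erase_of_mem hmT]
        omega
      by_cases hml : m = l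
      · -- min of the filter is l
        subst hml
        by_cases hmem : m ∈ V'.levels
        · -- l still a level of V'
          have hmT' : m ∈ V'.levels.filter (fun x => l' < x) :=
            Finset.mem_filter.mpr ⟨hmem, hl'm⟩
          have hne' : (V'.levels.filter (fun x => l' < x)).Nonempty := ⟨m, hmT'⟩
          have hmin' : (V'.levels.filter (fun x => l' < x)).min' hne' = m := by
            refine le_antisymm (Finset.min'_le _ _ hmT') (Finset.le_min' _ _ _ (fun y hy => ?_))
            have : y ∈ V.levels.filter (fun x => l' < x) :=
              Finset.filter_subset_filter _ hlev' hy
            exact Finset.min'_le _ _ this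
          have hcons' := levelsAbove_cons' V' l' hne'
          rw [hmin'] at hcons'
          rw [hcons, hcons', chainE_cons', chainE_cons', hAl, ← hDl]
          exact argOn_congr' hr (fun q hq q' hq' => hcostl q q' hq hq')
        · -- l no longer a level of V'
          have hfilt : V'.levels.filter (fun x => l' < x) = V'.levels.filter (fun x => m < x) := by
            ext x
            simp only [Finset.mem_filter]
            constructor
            · rintro ⟨hx, hlx⟩
              refine ⟨hx, lt_of_le_of_ne ?_ ?_⟩
              · exact Finset.min'_le _ _ (Finset.mem_filter.mpr ⟨hlev' hx, hlx⟩)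
              · rintro rfl; exact hmem hx
            · rintro ⟨hx, hlx⟩; exact ⟨hx, lt_trans hl'm hlx⟩
          have hLA : V'.levelsAbove l' = V.levelsAbove m := by
            rw [levelsAbove, hfilt, ← levelsAbove, hAl]
          rw [hcons, hLA, chainE_cons', ← hDl]
          exact argOn_of_const' hr (fun q hq q' hq' => by
            have h1 := hcostl q q' hq hq'
            have h2 := hl0 hmem q
            have h3 := hl0 hmem q'
            linarith)
      · -- min of the filter differs from l
        have hmem' : m ∈ V'.levels := (hlev m hml).mp hmlev
        have hmT' : m ∈ V'.levels.filter (fun x => l' < x) :=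
          Finset.mem_filter.mpr ⟨hmem', hl'm⟩
        have hne' : (V'.levels.filter (fun x => l' < x)).Nonempty := ⟨m, hmT'⟩
        have hmin' : (V'.levels.filter (fun x => l' < x)).min' hne' = m := by
          refine le_antisymm (Finset.min'_le _ _ hmT') (Finset.le_min' _ _ _ (fun y hy => ?_))
          exact Finset.min'_le _ _ (Finset.filter_subset_filter _ hlev' hy)
        have hcons' := levelsAbove_cons' V' l' hne'
        rw [hmin'] at hcons'
        rw [hcons, hcons', chainE_cons', chainE_cons', ih m hcard, hcost m hml]
    · rw [Finset.not_nonempty_iff_eq_empty] at hne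
      have hne' : V'.levels.filter (fun x => l' < x) = ∅ := by
        rw [← Finset.subset_empty, ← hne]
        exact Finset.filter_subset_filter _ hlev'
      rw [levelsAbove_of_empty' V l' hne, levelsAbove_of_empty' V' l' hne',
        chainE_nil', chainE_nil', hH]

end EWSystem

/-- if `S ⊆ Z` consists of ew-conditions all of level `l`, and any two
`succ(l)`-optimal (resp. `succ(l)`-min-optimal) extended models of `W` — or any two
extended models of `W` when `succ(l)` is undefined, i.e. `l` is the greatest level —
have equal sums `Σ_{B ∈ S} (⟦I ⊨ B⟧ + ⟦(I,ν) ⊨ B⟧)`, then `W` and `(H, Z \ S)` have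
the same optimal (resp. min-optimal) extended models. -/
theorem stmt12 {ι ε : Type*} (W : EWSystem ι ε) (S : Multiset (EWCond ι ε))
    (hS : S ≤ W.Z) (l : ℕ+) (hl : ∀ B ∈ S, B.lvl = l)
    (r : ℝ → ℝ → Prop) (hr : r = EWSystem.maxR ∨ r = EWSystem.minR)
    (heq : ∀ p p' : ι × ε,
      (if h : (W.levels.filter (fun l' => l < l')).Nonempty then
        W.LOptE r ((W.levels.filter (fun l' => l < l')).min' h) p ∧
        W.LOptE r ((W.levels.filter (fun l' => l < l')).min' h) p'
      else p ∈ W.H ∧ p' ∈ W.H) →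
      (S.map (fun B => B.costI p.1 + B.costE p)).sum =
      (S.map (fun B => B.costI p'.1 + B.costE p')).sum) :
    ∀ p : ι × ε, W.OptimalE r p ↔ (EWSystem.mk W.H (W.Z - S)).OptimalE r p := by
  intro p
  classical
  set W' : EWSystem ι ε := ⟨W.H, W.Z - S⟩ with hW'def
  have hZ : W.Z = W'.Z + S := (tsub_add_cancel_of_le hS).symm
  have hH : W'.H = W.H := rfl
  have hcost_split : ∀ (x : ℕ+) (q : ι × ε), W.levelCostE x q = W'.levelCostE x q +
      (S.map (fun B => if B.lvl = x then B.costI q.1 + B.costE q else 0)).sum := by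
    intro x q
    rw [EWSystem.levelCostE, hZ, Multiset.map_add, Multiset.sum_add]
    rfl
  have hcost : ∀ x, x ≠ l → W'.levelCostE x = W.levelCostE x := by
    intro x hx
    funext q
    rw [hcost_split x q]
    have hz : (S.map (fun B => if B.lvl = x then B.costI q.1 + B.costE q else 0)).sum = 0 := by
      refine Multiset.sum_eq_zero (fun z hz => ?_)
      obtain ⟨B, hB, rfl⟩ := Multiset.mem_map.mp hz
      rw [if_neg (by rw [hl B hB]; exact fun h => hx h.symm)]
    rw [hz, add_zero]
  have hσ : ∀ q : ι × ε, W.levelCostE l q = W'.levelCostE l q +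
      (S.map (fun B => B.costI q.1 + B.costE q)).sum := by
    intro q
    rw [hcost_split l q]
    refine congrArg (fun t => W'.levelCostE l q + t)
      (congrArg Multiset.sum (Multiset.map_congr rfl (fun B hB => ?_)))
    rw [if_pos (hl B hB)]
  have hlevmap : (W.Z.map EWCond.lvl) = (W'.Z.map EWCond.lvl) + (S.map EWCond.lvl) := by
    rw [hZ, Multiset.map_add]
  have hlev : ∀ x, x ≠ l → (x ∈ W.levels ↔ x ∈ W'.levels) := by
    intro x hx
    simp only [EWSystem.levels, hlevmap, Multiset.toFinset_add, Finset.mem_union,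
      Multiset.mem_toFinset, Multiset.mem_map]
    constructor
    · rintro (h | ⟨B, hB, rfl⟩)
      · exact h
      · exact absurd (hl B hB) hx
    · exact Or.inl
  have hlev' : W'.levels ⊆ W.levels := by
    intro x hx
    simp only [EWSystem.levels, hlevmap, Multiset.toFinset_add, Finset.mem_union] at *
    exact Or.inl hx
  have hl0 : l ∉ W'.levels → ∀ q, W'.levelCostE l q = 0 := by
    intro hmem q
    refine Multiset.sum_eq_zero (fun z hz => ?_)
    obtain ⟨B, hB, rfl⟩ := Multiset.mem_map.mp hz
    rw [if_neg (fun h => hmem (by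
      simp only [EWSystem.levels, Multiset.mem_toFinset, Multiset.mem_map]
      exact ⟨B, hB, h⟩))]
  have hσconst : ∀ q q' : ι × ε, q ∈ W.chainE r (W.levelsAbove l) →
      q' ∈ W.chainE r (W.levelsAbove l) →
      (S.map (fun B => B.costI q.1 + B.costE q)).sum =
      (S.map (fun B => B.costI q'.1 + B.costE q')).sum := by
    intro q q' hq hq'
    refine heq q q' ?_
    by_cases hne : (W.levels.filter (fun l' => l < l')).Nonempty
    · rw [dif_pos hne]
      have hcons := EWSystem.levelsAbove_cons' W l hne
      rw [hcons, EWSystem.chainE_cons'] at hq hq'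
      exact ⟨hq, hq'⟩
    · rw [dif_neg hne]
      rw [Finset.not_nonempty_iff_eq_empty] at hne
      rw [EWSystem.levelsAbove_of_empty' W l hne, EWSystem.chainE_nil'] at hq hq'
      exact ⟨hq, hq'⟩
  have hcostl : ∀ q q' : ι × ε, q ∈ W.chainE r (W.levelsAbove l) →
      q' ∈ W.chainE r (W.levelsAbove l) →
      W.levelCostE l q - W.levelCostE l q' = W'.levelCostE l q - W'.levelCostE l q' := by
    intro q q' hq hq'
    have h1 := hσ q
    have h2 := hσ q'
    have h3 := hσconst q q' hq hq'
    linarith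
  have hchain := EWSystem.chain_eq_aux W W' r hr l hH hlev hlev' hcost hcostl hl0
  have hAl : W'.levelsAbove l = W.levelsAbove l := by
    rw [EWSystem.levelsAbove, EWSystem.levelsAbove]
    congr 1
    ext x
    simp only [Finset.mem_filter]
    constructor
    · rintro ⟨hx, hlx⟩; exact ⟨(hlev x (ne_of_gt hlx)).mpr hx, hlx⟩
    · rintro ⟨hx, hlx⟩; exact ⟨(hlev x (ne_of_gt hlx)).mp hx, hlx⟩
  have hDl : W.chainE r (W.levelsAbove l) = W'.chainE r (W.levelsAbove l) := by
    refine EWSystem.chainE_congr' W W' hH r _ (fun x hx => ?_)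
    have : l < x := (Finset.mem_filter.mp ((Finset.mem_sort _).mp hx)).2
    exact hcost x (ne_of_gt this)
  have hLopt : ∀ x : ℕ+, (W.LOptE r x p ↔ W'.LOptE r x p) := by
    intro x
    by_cases hx : x = l
    · subst hx
      rw [EWSystem.LOptE, EWSystem.LOptE, hAl, ← hDl,
        EWSystem.argOn_congr' hr (fun q hq q' hq' => hcostl q q' hq hq')]
    · rw [EWSystem.LOptE, EWSystem.LOptE, hcost x hx, hchain x]
  constructor
  · rintro ⟨hpH, hall⟩
    exact ⟨hpH, fun x hx => (hLopt x).mp (hall x (hlev' hx))⟩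
  · rintro ⟨hpH, hall⟩
    refine ⟨hpH, fun x hx => ?_⟩
    by_cases hxl : x ∈ W'.levels
    · exact (hLopt x).mpr (hall x hxl)
    · have hxeq : x = l := by
        by_contra hne
        exact hxl ((hlev x hne).mp hx)
      subst hxeq
      refine (hLopt x).mpr ?_
      rw [EWSystem.LOptE, EWSystem.argOn_of_const' hr (fun q hq q' hq' => by
        rw [hl0 hxl q, hl0 hxl q'])]
      exact EWSystem.mem_chainE_of_opt W' r p hpH hall x
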